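/- Let α ∈ {−1,1}. For all x, y ∈ ℝ with x² + y² = 1, setting z = x + iy, the following identities hold in Cl(Q_α) for every w ∈ ℂ: (x·1 + y·ι(1)ι(i)) · ι(w) · (x·1 − y·ι(1)ι(i)) = ι(z^{−2α}·w), and ι(1) · ι(w) · ι(1) = α·ι(conj(w)), where z^{−2α} means conj(z)² when α = +1 and z² when α = −1. Consequently, with φ_α the injective homomorphism O₂(α) → (Cl(Q_α))ˣ with φ_α(z,0̂) = x + y·ι(1)ι(i) and φ_α(z,1̂) = (x + y·ι(1)ι(i))·ι(1), one has φ_α(z,t) · ι(w) · φ_α(z,t)⁻¹ = ι(z^{−2α}·w) if t = 0̂ and = ι(z^{−2α}·conj(w)) if t = 1̂; that is, the untwisted vector representation of Pin₂(α) agrees with Φ₀^{(−α)} ∘ σ_α. -/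

import Mathlib

set_option linter.unnecessarySeqFocus false

open Complex

/-- Complex conjugation as a group endomorphism of the circle group. -/
noncomputable def conjC : Circle →* Circle where
  toFun z := ⟨(starRingEnd ℂ) (z : ℂ), by
    simp only [Submonoid.unitSphere, Metric.mem_sphere, dist_zero_right]
    simp [Circle.norm_coe]⟩
  map_one' := by ext; simp
  map_mul' a b := by ext; simp <;> rfl

@[simp] lemma conjC_coe (z : Circle) : (conjC z : ℂ) = (starRingEnd ℂ) (z : ℂ) := rfl

@[simp] lemma conjC_conjC (z : Circle) : conjC (conjC z) = z := by
  ext; simp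

/-- The element `-1` of the circle group. -/
noncomputable def negOneC : Circle := ⟨-1, by
  simp only [Submonoid.unitSphere, Metric.mem_sphere, dist_zero_right]
  simp⟩

@[simp] lemma negOneC_coe : (negOneC : ℂ) = -1 := rfl

/-- The sign `α = ±1` as an element of the circle group. -/
noncomputable def sgnC (α : ℤˣ) : Circle := if α = 1 then 1 else negOneC

/-- The underlying type of a twisted extension of `ℤ₂ = {0̂, 1̂}` by a commutative group `A`,
with twisting endomorphism `τ` and cocycle value `a₀`.  An element `⟨z, t⟩` stands for the
pair `(z, t)`.  The group `O₂(α)` of the paper is the case `A = Circle`, `τ` = complex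
conjugation, `a₀ = α = ±1`. -/
@[ext]
structure Tw (A : Type*) [CommGroup A] (τ : A →* A) (a₀ : A) where
  z : A
  t : ZMod 2

namespace Tw

variable {A : Type*} [CommGroup A] {τ : A →* A} {a₀ : A}

/-- The multiplication `(z₁,0̂)(z₂,t) = (z₁z₂, t)`, `(z₁,1̂)(z₂,0̂) = (z₁·τ(z₂), 1̂)`,
`(z₁,1̂)(z₂,1̂) = (a₀·z₁·τ(z₂), 0̂)`. -/
instance : Mul (Tw A τ a₀) :=
  ⟨fun g h => ⟨(if g.t = 1 ∧ h.t = 1 then a₀ else 1) * g.z * (if g.t = 1 then τ h.z else h.z),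
    g.t + h.t⟩⟩

/-- The unit `(1, 0̂)`. -/
instance : One (Tw A τ a₀) := ⟨⟨1, 0⟩⟩

instance : Inv (Tw A τ a₀) := ⟨fun g => ⟨if g.t = 1 then a₀⁻¹ * τ g.z⁻¹ else g.z⁻¹, g.t⟩⟩

@[simp] lemma mul_z (g h : Tw A τ a₀) :
    (g * h).z = (if g.t = 1 ∧ h.t = 1 then a₀ else 1) * g.z * (if g.t = 1 then τ h.z else h.z) :=
  rfl

@[simp] lemma mul_t (g h : Tw A τ a₀) : (g * h).t = g.t + h.t := rfl

@[simp] lemma one_z : (1 : Tw A τ a₀).z = 1 := rfl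
@[simp] lemma one_t : (1 : Tw A τ a₀).t = 0 := rfl

@[simp] lemma inv_z (g : Tw A τ a₀) :
    (g⁻¹).z = if g.t = 1 then a₀⁻¹ * τ g.z⁻¹ else g.z⁻¹ := rfl
@[simp] lemma inv_t (g : Tw A τ a₀) : (g⁻¹).t = g.t := rfl

lemma zmod2_cases : ∀ t : ZMod 2, t = 0 ∨ t = 1 := by decide

instance group [Fact (∀ a : A, τ (τ a) = a)] [Fact (τ a₀ = a₀)] : Group (Tw A τ a₀) := by
  have hττ := Fact.out (p := ∀ a : A, τ (τ a) = a)
  have hτa := Fact.out (p := τ a₀ = a₀)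
  refine Group.ofLeftAxioms ?_ ?_ ?_
  · rintro ⟨z₁, t₁⟩ ⟨z₂, t₂⟩ ⟨z₃, t₃⟩
    rcases zmod2_cases t₁ with rfl | rfl <;> rcases zmod2_cases t₂ with rfl | rfl <;>
      rcases zmod2_cases t₃ with rfl | rfl <;> ext <;>
      simp [hττ, hτa, map_mul, mul_comm, mul_assoc, mul_left_comm] <;> decide
  · rintro ⟨z, t⟩
    ext <;> simp
  · rintro ⟨z, t⟩
    rcases zmod2_cases t with rfl | rfl <;> ext <;>
      simp [hττ, hτa, map_mul, mul_comm, mul_assoc, mul_left_comm] <;> decide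

end Tw

instance : Fact (∀ a : Circle, conjC (conjC a) = a) := ⟨conjC_conjC⟩

instance (α : ℤˣ) : Fact (conjC (sgnC α) = sgnC α) := ⟨by
  rcases Int.units_eq_one_or α with rfl | rfl <;> ext <;> simp [sgnC, negOneC] <;>
    exact (conjC_coe _).trans (show (starRingEnd ℂ) (-1) = -1 by simp)⟩

/-- The group `O₂(α)` for a sign `α ∈ {−1, 1}`: underlying set `Circle × ℤ₂` with the
twisted multiplication `(z₁,0̂)(z₂,t) = (z₁z₂,t)`, `(z₁,1̂)(z₂,0̂) = (z₁·conj(z₂),1̂)`,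
`(z₁,1̂)(z₂,1̂) = (α·z₁·conj(z₂),0̂)` and unit `(1,0̂)`. -/
abbrev O2 (α : ℤˣ) : Type := Tw Circle conjC (sgnC α)

open CliffordAlgebra in
lemma cl_facts (A : ℝ) (hA : A = 1 ∨ A = -1) (Q : QuadraticForm ℝ ℂ)
    (hQ : ∀ w : ℂ, Q w = A * Complex.normSq w) :
    (∀ w : ℂ, ι Q w = w.re • ι Q 1 + w.im • ι Q Complex.I) ∧
    (∀ x y u v : ℝ,
      (algebraMap ℝ (CliffordAlgebra Q) x + y • (ι Q 1 * ι Q Complex.I)) *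
        (u • ι Q 1 + v • ι Q Complex.I) *
        (algebraMap ℝ (CliffordAlgebra Q) x - y • (ι Q 1 * ι Q Complex.I)) =
      ((x^2 - y^2)*u + 2*x*y*A*v) • ι Q 1 + ((x^2 - y^2)*v - 2*x*y*A*u) • ι Q Complex.I) ∧
    (∀ u v : ℝ,
      ι Q 1 * (u • ι Q 1 + v • ι Q Complex.I) * ι Q 1 =
      (A*u) • ι Q 1 + (-(A*v)) • ι Q Complex.I) ∧
    (∀ x y u v : ℝ,
      (algebraMap ℝ (CliffordAlgebra Q) x + y • (ι Q 1 * ι Q Complex.I)) * ι Q 1 *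
        (u • ι Q 1 + v • ι Q Complex.I) *
        ((algebraMap ℝ (CliffordAlgebra Q) (A*x) + (A*y) • (ι Q 1 * ι Q Complex.I)) * ι Q 1) =
      ((x^2 - y^2)*u - 2*x*y*A*v) • ι Q 1 +
        (-(2*x*y*A*u) - (x^2-y^2)*v) • ι Q Complex.I) := by
  set e₁ := ι Q 1 with he₁
  set e₂ := ι Q Complex.I with he₂
  have h11 : e₁ * e₁ = A • (1 : CliffordAlgebra Q) := by
    rw [he₁, ι_sq_scalar, hQ, Algebra.algebraMap_eq_smul_one]; norm_num
  have h22 : e₂ * e₂ = A • (1 : CliffordAlgebra Q) := by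
    rw [he₂, ι_sq_scalar, hQ, Algebra.algebraMap_eq_smul_one]; norm_num
  have h21 : e₂ * e₁ = -(e₁ * e₂) := by
    have h := CliffordAlgebra.ι_mul_ι_add_swap (Q := Q) 1 Complex.I
    rw [QuadraticMap.polar] at h
    simp only [hQ] at h
    norm_num [Complex.normSq_apply] at h
    rw [← he₁, ← he₂] at h
    have h0 : e₁ * e₂ + e₂ * e₁ = 0 := by
      rw [h]
      have : (A * 2 - A - A : ℝ) = 0 := by ring
      rw [← map_mul, ← map_sub, ← map_sub, this, map_zero]
    exact eq_neg_of_add_eq_zero_right h0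
  set E := e₁ * e₂ with hE
  have hE1 : E * e₁ = (-A) • e₂ := by
    rw [hE, mul_assoc, h21, mul_neg, ← mul_assoc, h11, smul_mul_assoc, one_mul, neg_smul]
  have h1E : e₁ * E = A • e₂ := by
    rw [hE, ← mul_assoc, h11, smul_mul_assoc, one_mul]
  have hE2 : E * e₂ = A • e₁ := by
    rw [hE, mul_assoc, h22, mul_smul_comm, mul_one]
  have h2E : e₂ * E = (-A) • e₁ := by
    rw [hE, ← mul_assoc, h21, neg_mul, mul_assoc, h22, mul_smul_comm, mul_one, neg_smul]
  refine ⟨?_, ?_, ?_, ?_⟩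
  · intro w
    conv_lhs => rw [show w = w.re • (1 : ℂ) + w.im • Complex.I by
      simp [Complex.real_smul, Complex.re_add_im]]
    rw [map_add, map_smul, map_smul]
  · intro x y u v
    rw [Algebra.algebraMap_eq_smul_one]
    simp only [add_mul, mul_add, sub_mul, mul_sub, smul_mul_assoc, mul_smul_comm, one_mul,
      mul_one, smul_smul, h11, h22, h21, hE1, h1E, hE2, h2E]
    match_scalars <;> rcases hA with h | h <;> rw [h] <;> ring
  · intro u v
    simp only [add_mul, mul_add, smul_mul_assoc, mul_smul_comm, one_mul,
      mul_one, smul_smul, h11, h22, h21, hE1, h1E, hE2, h2E, ← hE]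
    match_scalars <;> rcases hA with h | h <;> rw [h] <;> ring
  · intro x y u v
    have hg : ∀ p q : ℝ, (algebraMap ℝ (CliffordAlgebra Q) p + q • E) * e₁ =
        p • e₁ + (-(q*A)) • e₂ := by
      intro p q
      rw [Algebra.algebraMap_eq_smul_one]
      simp only [add_mul, smul_mul_assoc, one_mul, hE1, smul_smul]
      match_scalars <;> ring
    have P : ∀ p q : ℝ, (p • e₁ + q • e₂) * (u • e₁ + v • e₂) =
        (A*(p*u+q*v)) • (1 : CliffordAlgebra Q) + (p*v - q*u) • E := by
      intro p q
      simp only [add_mul, mul_add, smul_mul_assoc, mul_smul_comm, smul_smul,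
        h11, h22, h21, ← hE]
      match_scalars <;> ring
    have T : ∀ p q r s : ℝ, (p • e₁ + q • e₂) * (u • e₁ + v • e₂) * (r • e₁ + s • e₂) =
        (A*((p*u+q*v)*r + (p*v-q*u)*s)) • e₁ + (A*((p*u+q*v)*s - (p*v-q*u)*r)) • e₂ := by
      intro p q r s
      rw [P]
      simp only [add_mul, mul_add, smul_mul_assoc, mul_smul_comm, one_mul, smul_smul,
        hE1, hE2]
      match_scalars <;> ring
    rw [hg, hg, T]
    match_scalars <;> rcases hA with h | h <;> rw [h] <;> ring

open CliffordAlgebra in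
/-- Conjugation identities in `Cl(Q_α)`, `Q_α(w) = α·|w|²`: for `z = x + iy` of unit norm,
`(x + y·ι(1)ι(i))·ι(w)·(x − y·ι(1)ι(i)) = ι(z^{−2α}·w)` and `ι(1)ι(w)ι(1) = α·ι(conj w)`;
consequently the untwisted vector representation of `Pin₂(α) ≅ O₂(α)` is
`Φ₀^{(−α)} ∘ σ_α`, i.e. `φ_α(z,t)·ι(w)·φ_α(z,t)⁻¹` equals `ι(z^{−2α}·w)` for `t = 0̂` and
`ι(z^{−2α}·conj(w))` for `t = 1̂`. -/
theorem pin2_untwisted_vector_rep (α : ℤˣ) (Q : QuadraticForm ℝ ℂ)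
    (hQ : ∀ w : ℂ, Q w = (α : ℝ) * Complex.normSq w) :
    (∀ x y : ℝ, x ^ 2 + y ^ 2 = 1 → ∀ w : ℂ,
      (algebraMap ℝ (CliffordAlgebra Q) x + y • (ι Q 1 * ι Q Complex.I)) * ι Q w *
          (algebraMap ℝ (CliffordAlgebra Q) x - y • (ι Q 1 * ι Q Complex.I)) =
        ι Q ((if α = 1 then (starRingEnd ℂ) ((x : ℂ) + (y : ℂ) * Complex.I) ^ 2
              else ((x : ℂ) + (y : ℂ) * Complex.I) ^ 2) * w)) ∧
    (∀ w : ℂ, ι Q 1 * ι Q w * ι Q 1 = (α : ℝ) • ι Q ((starRingEnd ℂ) w)) ∧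
    (∀ φ : O2 α →* (CliffordAlgebra Q)ˣ,
      (∀ z : Circle, ((φ ⟨z, 0⟩ : (CliffordAlgebra Q)ˣ) : CliffordAlgebra Q) =
        algebraMap ℝ (CliffordAlgebra Q) (z : ℂ).re +
          (z : ℂ).im • (ι Q 1 * ι Q Complex.I)) →
      (∀ z : Circle, ((φ ⟨z, 1⟩ : (CliffordAlgebra Q)ˣ) : CliffordAlgebra Q) =
        (algebraMap ℝ (CliffordAlgebra Q) (z : ℂ).re +
          (z : ℂ).im • (ι Q 1 * ι Q Complex.I)) * ι Q 1) →
      ∀ (z : Circle) (w : ℂ),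
        (((φ ⟨z, 0⟩ : (CliffordAlgebra Q)ˣ) : CliffordAlgebra Q) * ι Q w *
            (((φ ⟨z, 0⟩)⁻¹ : (CliffordAlgebra Q)ˣ) : CliffordAlgebra Q) =
          ι Q ((if α = 1 then (starRingEnd ℂ) (z : ℂ) ^ 2 else (z : ℂ) ^ 2) * w)) ∧
        (((φ ⟨z, 1⟩ : (CliffordAlgebra Q)ˣ) : CliffordAlgebra Q) * ι Q w *
            (((φ ⟨z, 1⟩)⁻¹ : (CliffordAlgebra Q)ˣ) : CliffordAlgebra Q) =
          ι Q ((if α = 1 then (starRingEnd ℂ) (z : ℂ) ^ 2 else (z : ℂ) ^ 2) *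
            (starRingEnd ℂ) w))) := by
  have hA : (α : ℝ) = 1 ∨ (α : ℝ) = -1 := by
    rcases Int.units_eq_one_or α with rfl | rfl <;> norm_num
  obtain ⟨ιd, pA, pB, pC⟩ := cl_facts (α : ℝ) hA Q hQ
  have hsel : ∀ c : ℂ, (if α = 1 then (starRingEnd ℂ) c ^ 2 else c ^ 2) =
      ((c.re^2 - c.im^2 : ℝ) : ℂ) + ((-(2*(α : ℝ)*c.re*c.im) : ℝ) : ℂ) * Complex.I := by
    intro c
    rcases Int.units_eq_one_or α with rfl | rfl
    · rw [if_pos rfl]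
      apply Complex.ext <;>
        simp [pow_two, Complex.mul_re, Complex.mul_im] <;> ring
    · rw [if_neg (by decide)]
      apply Complex.ext <;>
        simp [pow_two, Complex.mul_re, Complex.mul_im] <;> ring
  refine ⟨?_, ?_, ?_⟩
  · intro x y hxy w
    rw [hsel]
    conv_rhs => rw [ιd]
    rw [ιd w, pA x y w.re w.im]
    match_scalars <;>
      simp only [pow_two, Complex.add_re, Complex.add_im, Complex.sub_re, Complex.sub_im,
        Complex.neg_re, Complex.neg_im, Complex.mul_re, Complex.mul_im,
        Complex.ofReal_re, Complex.ofReal_im, Complex.I_re, Complex.I_im,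
          Complex.intCast_re, Complex.intCast_im, Complex.re_ofNat, Complex.im_ofNat] <;>
      rcases hA with h | h <;> rw [h] <;> ring
  · intro w
    conv_rhs => rw [ιd]
    rw [ιd w, pB w.re w.im]
    match_scalars <;>
      simp only [Complex.conj_re, Complex.conj_im] <;>
      rcases hA with h | h <;> rw [h] <;> ring
  · intro φ h0 h1 z w
    have hz : ((z:ℂ).re)^2 + ((z:ℂ).im)^2 = 1 := by
      have h := Circle.normSq_coe z
      rw [Complex.normSq_apply] at h
      linear_combination h
    constructor
    · have hinv : (φ ⟨z, 0⟩)⁻¹ = φ ⟨z⁻¹, 0⟩ := by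
        rw [← map_inv]
        congr 1
      rw [hinv, h0 z, h0 z⁻¹, Circle.coe_inv_eq_conj, Complex.conj_re, Complex.conj_im,
        neg_smul, ← sub_eq_add_neg, hsel]
      conv_rhs => rw [ιd]
      rw [ιd w, pA (z:ℂ).re (z:ℂ).im w.re w.im]
      match_scalars <;>
        simp only [pow_two, Complex.add_re, Complex.add_im, Complex.sub_re, Complex.sub_im,
          Complex.neg_re, Complex.neg_im, Complex.mul_re, Complex.mul_im,
          Complex.ofReal_re, Complex.ofReal_im, Complex.I_re, Complex.I_im,
          Complex.intCast_re, Complex.intCast_im, Complex.re_ofNat, Complex.im_ofNat] <;>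
        rcases hA with h | h <;> rw [h] <;> ring
    · have hinv : (φ ⟨z, 1⟩)⁻¹ = φ ⟨(sgnC α)⁻¹ * conjC z⁻¹, 1⟩ := by
        rw [← map_inv]
        congr 1
      have hre : (((sgnC α)⁻¹ * conjC z⁻¹ : Circle) : ℂ).re = (α : ℝ) * (z:ℂ).re := by
        rcases Int.units_eq_one_or α with rfl | rfl <;>
          simp [sgnC, Circle.coe_inv_eq_conj]
      have him : (((sgnC α)⁻¹ * conjC z⁻¹ : Circle) : ℂ).im = (α : ℝ) * (z:ℂ).im := by
        rcases Int.units_eq_one_or α with rfl | rfl <;>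
          simp [sgnC, Circle.coe_inv_eq_conj]
      rw [hinv, h1 z, h1 ((sgnC α)⁻¹ * conjC z⁻¹), hre, him, ιd w,
        pC (z:ℂ).re (z:ℂ).im w.re w.im, hsel]
      conv_rhs => rw [ιd]
      match_scalars <;>
        simp only [pow_two, Complex.add_re, Complex.add_im, Complex.sub_re, Complex.sub_im,
          Complex.neg_re, Complex.neg_im, Complex.mul_re, Complex.mul_im,
          Complex.ofReal_re, Complex.ofReal_im, Complex.I_re, Complex.I_im,
          Complex.intCast_re, Complex.intCast_im, Complex.re_ofNat, Complex.im_ofNat,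
          Complex.conj_re, Complex.conj_im] <;>
        rcases hA with h | h <;> rw [h] <;> ring
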